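/- Let C be the real line and f an analytic function on the closed first and third quadrants of the complex plane that decays sufficiently fast at infinity (e.g. |f(z)||z|^2 → 0 uniformly as |z| → ∞ in those quadrants). Then ∫_{-∞}^{∞} f(x)|x| dx = i² ∫_{-∞}^{∞} f(it)|t| dt, i.e. the contour of the integral ∫ f(z)|z| dz may be rotated from the real axis to the imaginary axis. -/

import Mathlib

open Complex MeasureTheory Filter Set Topology intervalIntegral in
lemma quarter1 (g : ℂ → ℂ)
    (hg : DifferentiableOn ℂ g {z : ℂ | 0 ≤ z.re ∧ 0 ≤ z.im})
    (hdec : ∀ ε > (0:ℝ), ∃ R : ℝ, ∀ z : ℂ, 0 ≤ z.re → 0 ≤ z.im →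
      R ≤ ‖z‖ → ‖g z‖ * ‖z‖ ≤ ε)
    {A C : ℂ}
    (hA : Tendsto (fun R : ℝ => ∫ x in (0:ℝ)..R, g x) atTop (𝓝 A))
    (hC : Tendsto (fun R : ℝ => ∫ t in (0:ℝ)..R, g (t * Complex.I)) atTop (𝓝 C)) :
    A = Complex.I * C := by
  have key : Tendsto (fun R : ℝ =>
      (∫ x in (0:ℝ)..R, g x) - Complex.I • ∫ t in (0:ℝ)..R, g (t * Complex.I)) atTop
      (𝓝 (A - Complex.I • C)) := hA.sub (hC.const_smul Complex.I)
  have key0 : Tendsto (fun R : ℝ =>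
      (∫ x in (0:ℝ)..R, g x) - Complex.I • ∫ t in (0:ℝ)..R, g (t * Complex.I)) atTop
      (𝓝 0) := by
    rw [NormedAddCommGroup.tendsto_nhds_zero]
    intro ε hε
    obtain ⟨R0, hR0⟩ := hdec (ε/4) (by positivity)
    filter_upwards [eventually_ge_atTop (max R0 1)] with R hR
    have hR1 : (1:ℝ) ≤ R := le_trans (le_max_right _ _) hR
    have hR0R : R0 ≤ R := le_trans (le_max_left _ _) hR
    have hRpos : (0:ℝ) < R := by linarith
    -- rectangle
    have hsub : Set.uIcc (0:ℂ).re ((R:ℂ) + R * Complex.I).re ×ℂ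
        Set.uIcc (0:ℂ).im ((R:ℂ) + R * Complex.I).im ⊆ {z : ℂ | 0 ≤ z.re ∧ 0 ≤ z.im} := by
      intro z hz
      rw [Complex.mem_reProdIm] at hz
      simp only [Complex.zero_re, Complex.zero_im, Complex.add_re, Complex.add_im,
        Complex.ofReal_re, Complex.ofReal_im, Complex.mul_re, Complex.mul_im,
        Complex.I_re, Complex.I_im] at hz
      rw [Set.uIcc_of_le (by linarith), Set.uIcc_of_le (by linarith)] at hz
      exact ⟨hz.1.1, hz.2.1⟩
    have hrect := Complex.integral_boundary_rect_eq_zero_of_differentiableOn g 0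
      ((R:ℂ) + R * Complex.I) (hg.mono hsub)
    simp only [Complex.zero_re, Complex.zero_im, Complex.add_re, Complex.add_im,
      Complex.ofReal_re, Complex.ofReal_im, Complex.mul_re, Complex.mul_im,
      Complex.I_re, Complex.I_im, mul_zero, mul_one, zero_mul, sub_zero, add_zero,
      zero_add, Complex.ofReal_zero] at hrect
    -- hrect : (∫ x in 0..R, g x) - (∫ x in 0..R, g (x + R*I)) + I•(∫ y in 0..R, g (R + y*I))
    --          - I•(∫ y in 0..R, g (y*I)) = 0
    have heq : (∫ x in (0:ℝ)..R, g x) - Complex.I • ∫ t in (0:ℝ)..R, g (t * Complex.I) =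
        (∫ x in (0:ℝ)..R, g (x + R * Complex.I)) -
          Complex.I • ∫ y in (0:ℝ)..R, g (R + y * Complex.I) := by
      linear_combination hrect
    rw [heq]
    have hbound : ∀ z : ℂ, 0 ≤ z.re → 0 ≤ z.im → R ≤ ‖z‖ →
        ‖g z‖ ≤ ε / 4 / R := by
      intro z h1 h2 h3
      have habs : (0:ℝ) < ‖z‖ := lt_of_lt_of_le hRpos h3
      have := hR0 z h1 h2 (le_trans hR0R h3)
      calc ‖g z‖ ≤ (ε/4) / ‖z‖ := (le_div_iff₀ habs).mpr this
        _ ≤ ε / 4 / R := by gcongr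
    have htop : ‖∫ x in (0:ℝ)..R, g (x + R * Complex.I)‖ ≤ ε / 4 := by
      have := intervalIntegral.norm_integral_le_of_norm_le_const
        (C := ε / 4 / R) (a := (0:ℝ)) (b := R)
        (f := fun x : ℝ => g (x + R * Complex.I)) ?_
      · calc ‖∫ x in (0:ℝ)..R, g (x + R * Complex.I)‖ ≤ ε / 4 / R * |R - 0| := this
          _ = ε / 4 := by rw [sub_zero, abs_of_pos hRpos]; field_simp
      · intro x hx
        rw [Set.uIoc_of_le hRpos.le] at hx
        refine hbound _ ?_ ?_ ?_
        · simp; exact hx.1.le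
        · simp; exact hRpos.le
        · refine le_trans ?_ (Complex.abs_im_le_norm _)
          simp [abs_of_pos hRpos]
    have hright : ‖∫ y in (0:ℝ)..R, g ((R:ℂ) + y * Complex.I)‖ ≤ ε / 4 := by
      have := intervalIntegral.norm_integral_le_of_norm_le_const
        (C := ε / 4 / R) (a := (0:ℝ)) (b := R)
        (f := fun y : ℝ => g ((R:ℂ) + y * Complex.I)) ?_
      · calc ‖∫ y in (0:ℝ)..R, g ((R:ℂ) + y * Complex.I)‖ ≤ ε / 4 / R * |R - 0| := this
          _ = ε / 4 := by rw [sub_zero, abs_of_pos hRpos]; field_simp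
      · intro y hy
        rw [Set.uIoc_of_le hRpos.le] at hy
        refine hbound _ ?_ ?_ ?_
        · simp; exact hRpos.le
        · simp; exact hy.1.le
        · refine le_trans ?_ (Complex.abs_re_le_norm _)
          simp [abs_of_pos hRpos]
    calc ‖(∫ x in (0:ℝ)..R, g (x + R * Complex.I)) -
          Complex.I • ∫ y in (0:ℝ)..R, g ((R:ℂ) + y * Complex.I)‖
        ≤ ‖∫ x in (0:ℝ)..R, g (x + R * Complex.I)‖ +
          ‖Complex.I • ∫ y in (0:ℝ)..R, g ((R:ℂ) + y * Complex.I)‖ := norm_sub_le _ _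
      _ = ‖∫ x in (0:ℝ)..R, g (x + R * Complex.I)‖ +
          ‖∫ y in (0:ℝ)..R, g ((R:ℂ) + y * Complex.I)‖ := by
          rw [norm_smul, Complex.norm_I, one_mul]
      _ ≤ ε / 4 + ε / 4 := add_le_add htop hright
      _ < ε := by linarith
  have := tendsto_nhds_unique key key0
  rw [sub_eq_zero] at this
  rw [this, smul_eq_mul]

open Complex MeasureTheory Filter in
/-- Contour rotation: if `f` is analytic on (neighborhoods of) the closed first and
third quadrants, decays like `o(1/|z|²)` there, and both integrals converge
absolutely, then `∫_{-∞}^{∞} f(x)|x| dx = i² ∫_{-∞}^{∞} f(it)|t| dt`. -/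
theorem contour_rotation_abs_weight (f : ℂ → ℂ)
    (hf1 : ∃ U : Set ℂ, IsOpen U ∧ {z : ℂ | 0 ≤ z.re ∧ 0 ≤ z.im} ⊆ U ∧
      AnalyticOn ℂ f U)
    (hf3 : ∃ U : Set ℂ, IsOpen U ∧ {z : ℂ | z.re ≤ 0 ∧ z.im ≤ 0} ⊆ U ∧
      AnalyticOn ℂ f U)
    (hdecay : ∀ ε > (0:ℝ), ∃ R : ℝ, ∀ z : ℂ,
      (0 ≤ z.re ∧ 0 ≤ z.im) ∨ (z.re ≤ 0 ∧ z.im ≤ 0) → R ≤ ‖z‖ →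
      ‖f z‖ * ‖z‖ ^ 2 ≤ ε)
    (hint_re : Integrable (fun x : ℝ => f x * |x|))
    (hint_im : Integrable (fun t : ℝ => f (Complex.I * t) * |t|)) :
    ∫ x : ℝ, f x * |x| = Complex.I ^ 2 * ∫ t : ℝ, f (Complex.I * t) * |t| := by
  obtain ⟨U1, hU1o, hU1s, hU1a⟩ := hf1
  obtain ⟨U3, hU3o, hU3s, hU3a⟩ := hf3
  set g : ℂ → ℂ := fun z => f z * z with hg_def
  -- differentiability
  have hfd1 : DifferentiableOn ℂ f U1 := hU1a.differentiableOn
  have hfd3 : DifferentiableOn ℂ f U3 := hU3a.differentiableOn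
  have hg1 : DifferentiableOn ℂ g {z : ℂ | 0 ≤ z.re ∧ 0 ≤ z.im} :=
    ((hfd1.mono hU1s).mul differentiableOn_id)
  have hg3' : DifferentiableOn ℂ g {z : ℂ | z.re ≤ 0 ∧ z.im ≤ 0} :=
    ((hfd3.mono hU3s).mul differentiableOn_id)
  have hg3 : DifferentiableOn ℂ (fun z => g (-z)) {z : ℂ | 0 ≤ z.re ∧ 0 ≤ z.im} := by
    refine hg3'.comp (differentiable_neg.differentiableOn) ?_
    intro z hz
    exact ⟨by simpa [Complex.neg_re] using neg_nonpos.mpr hz.1,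
      by simpa [Complex.neg_im] using neg_nonpos.mpr hz.2⟩
  -- decay of g
  have habs_g : ∀ z : ℂ, ‖g z‖ * ‖z‖ =
      ‖f z‖ * ‖z‖ ^ 2 := by
    intro z
    simp only [hg_def, norm_mul, sq]
    ring
  have hdec1 : ∀ ε > (0:ℝ), ∃ R : ℝ, ∀ z : ℂ, 0 ≤ z.re → 0 ≤ z.im →
      R ≤ ‖z‖ → ‖g z‖ * ‖z‖ ≤ ε := by
    intro ε hε
    obtain ⟨R, hR⟩ := hdecay ε hε
    exact ⟨R, fun z h1 h2 h3 => (habs_g z) ▸ hR z (Or.inl ⟨h1, h2⟩) h3⟩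
  have hdec3 : ∀ ε > (0:ℝ), ∃ R : ℝ, ∀ z : ℂ, 0 ≤ z.re → 0 ≤ z.im →
      R ≤ ‖z‖ → ‖g (-z)‖ * ‖z‖ ≤ ε := by
    intro ε hε
    obtain ⟨R, hR⟩ := hdecay ε hε
    refine ⟨R, fun z h1 h2 h3 => ?_⟩
    have := hR (-z) (Or.inr ⟨by simpa [Complex.neg_re] using neg_nonpos.mpr h1,
      by simpa [Complex.neg_im] using neg_nonpos.mpr h2⟩) (by rwa [norm_neg])
    rw [← habs_g] at this
    simpa [norm_neg] using this
  -- integrability on halves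
  have hre_left : IntegrableOn (fun x : ℝ => f x * |x|) (Set.Iic 0) := hint_re.integrableOn
  have hre_right : IntegrableOn (fun x : ℝ => f x * |x|) (Set.Ioi 0) := hint_re.integrableOn
  have him_left : IntegrableOn (fun t : ℝ => f (Complex.I * t) * |t|) (Set.Iic 0) :=
    hint_im.integrableOn
  have him_right : IntegrableOn (fun t : ℝ => f (Complex.I * t) * |t|) (Set.Ioi 0) :=
    hint_im.integrableOn
  have hInt1 : IntegrableOn (fun x : ℝ => g x) (Set.Ioi 0) := by
    refine hre_right.congr_fun (fun x hx => ?_) measurableSet_Ioi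
    simp only [hg_def]
    rw [abs_of_pos (Set.mem_Ioi.mp hx)]
  have hInt3 : IntegrableOn (fun x : ℝ => g x) (Set.Iic 0) := by
    refine IntegrableOn.congr_fun (hre_left.neg) (fun x hx => ?_) measurableSet_Iic
    simp only [hg_def, Pi.neg_apply]
    rw [abs_of_nonpos (Set.mem_Iic.mp hx)]
    push_cast
    ring
  have hInt1' : IntegrableOn (fun t : ℝ => g (t * Complex.I)) (Set.Ioi 0) := by
    refine IntegrableOn.congr_fun (him_right.mul_const Complex.I) (fun t ht => ?_) measurableSet_Ioi
    simp only [hg_def]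
    rw [abs_of_pos (Set.mem_Ioi.mp ht)]
    ring
  have hInt3' : IntegrableOn (fun t : ℝ => g (t * Complex.I)) (Set.Iic 0) := by
    refine IntegrableOn.congr_fun ((him_left.mul_const Complex.I).neg) (fun t ht => ?_) measurableSet_Iic
    simp only [hg_def, Pi.neg_apply]
    rw [abs_of_nonpos (Set.mem_Iic.mp ht)]
    push_cast
    ring
  -- limits
  have hA : Tendsto (fun R : ℝ => ∫ x in (0:ℝ)..R, g x) atTop
      (nhds (∫ x in Set.Ioi (0:ℝ), g x)) :=
    intervalIntegral_tendsto_integral_Ioi 0 hInt1 tendsto_id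
  have hC : Tendsto (fun R : ℝ => ∫ t in (0:ℝ)..R, g (t * Complex.I)) atTop
      (nhds (∫ t in Set.Ioi (0:ℝ), g (t * Complex.I))) :=
    intervalIntegral_tendsto_integral_Ioi 0 hInt1' tendsto_id
  have hA3 : Tendsto (fun R : ℝ => ∫ x in (0:ℝ)..R, g (-(x:ℂ))) atTop
      (nhds (∫ x in Set.Iic (0:ℝ), g x)) := by
    have base := intervalIntegral_tendsto_integral_Iic (f := fun x : ℝ => g x) 0 hInt3
      tendsto_neg_atTop_atBot
    refine base.congr fun R => ?_
    rw [show (∫ x in (0:ℝ)..R, g (-(x:ℂ))) = ∫ x in (0:ℝ)..R, (fun y : ℝ => g y) (-x) by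
      refine intervalIntegral.integral_congr fun x _ => ?_; push_cast; ring_nf]
    rw [intervalIntegral.integral_comp_neg (fun y : ℝ => g y)]
    norm_num
  have hC3 : Tendsto (fun R : ℝ => ∫ t in (0:ℝ)..R, g (-((t:ℂ) * Complex.I))) atTop
      (nhds (∫ t in Set.Iic (0:ℝ), g (t * Complex.I))) := by
    have base := intervalIntegral_tendsto_integral_Iic (f := fun t : ℝ => g (t * Complex.I)) 0
      hInt3' tendsto_neg_atTop_atBot
    refine base.congr fun R => ?_
    rw [show (∫ t in (0:ℝ)..R, g (-((t:ℂ) * Complex.I))) =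
        ∫ t in (0:ℝ)..R, (fun s : ℝ => g (s * Complex.I)) (-t) by
      refine intervalIntegral.integral_congr fun t _ => ?_; push_cast; ring_nf]
    rw [intervalIntegral.integral_comp_neg (fun s : ℝ => g (s * Complex.I))]
    norm_num
  -- quarter rotations
  have eq1 : (∫ x in Set.Ioi (0:ℝ), g x) =
      Complex.I * ∫ t in Set.Ioi (0:ℝ), g (t * Complex.I) := quarter1 g hg1 hdec1 hA hC
  have eq3 : (∫ x in Set.Iic (0:ℝ), g x) =
      Complex.I * ∫ t in Set.Iic (0:ℝ), g (t * Complex.I) := by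
    refine quarter1 (fun z => g (-z)) hg3 hdec3 hA3 ?_
    exact hC3.congr fun R => by simp
  -- identify half-integrals with the statement's integrands
  have eArt : (∫ x in Set.Ioi (0:ℝ), f x * (|x| : ℝ)) = ∫ x in Set.Ioi (0:ℝ), g x := by
    refine setIntegral_congr_fun measurableSet_Ioi fun x hx => ?_
    simp only [hg_def]
    rw [abs_of_pos (Set.mem_Ioi.mp hx)]
  have eAlt : (∫ x in Set.Iic (0:ℝ), f x * (|x| : ℝ)) = -∫ x in Set.Iic (0:ℝ), g x := by
    rw [← MeasureTheory.integral_neg]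
    refine setIntegral_congr_fun measurableSet_Iic fun x hx => ?_
    simp only [hg_def]
    rw [abs_of_nonpos (Set.mem_Iic.mp hx)]
    push_cast
    ring
  have eCrt : (∫ t in Set.Ioi (0:ℝ), g (t * Complex.I)) =
      (∫ t in Set.Ioi (0:ℝ), f (Complex.I * t) * (|t| : ℝ)) * Complex.I := by
    rw [← integral_mul_const]
    refine setIntegral_congr_fun measurableSet_Ioi fun t ht => ?_
    simp only [hg_def]
    rw [abs_of_pos (Set.mem_Ioi.mp ht)]
    ring
  have eClt : (∫ t in Set.Iic (0:ℝ), g (t * Complex.I)) =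
      (∫ t in Set.Iic (0:ℝ), f (Complex.I * t) * (|t| : ℝ)) * (-Complex.I) := by
    rw [← integral_mul_const]
    refine setIntegral_congr_fun measurableSet_Iic fun t ht => ?_
    simp only [hg_def]
    rw [abs_of_nonpos (Set.mem_Iic.mp ht)]
    push_cast
    ring
  rw [← intervalIntegral.integral_Iic_add_Ioi hre_left hre_right (b := 0),
    ← intervalIntegral.integral_Iic_add_Ioi him_left him_right (b := 0), eArt, eAlt, eq1, eq3, eCrt, eClt]
  ring
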